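/- Suppose the initial state is distributed as μ, (D,ρ) regenerate μ at every flaw, and at each step flaws are addressed according to a fixed protocol. For any sequence of flaws a_1,...,a_t, conditioned on the event that for every i ≤ t the state σ_i before the i-th step satisfies σ_i ∈ a_i (and a_i is addressed at step i), the state σ_{t+1} after t steps is distributed exactly according to μ. -/

import Mathlib

open Classical in
/-- Process `C`: the initial state is distributed as `μ`, and at step `k` the flaw `a k`
is addressed at the current state (whenever it is present). If `(D,ρ)` regenerates `μ` at
every flaw, then conditioned on the event that `σ_k ∈ f(a_k)` for every `k ≤ t`, the
state after `t` steps is distributed exactly according to `μ`: for every `τ`,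
`Pr[σ_{t+1} = τ ∧ E] = μ(τ) · Pr[E]`. -/
theorem stmt_14 {Ω ι : Type*} [Fintype Ω] [DecidableEq Ω]
    (μ : Ω → ℝ) (hμpos : ∀ σ, 0 < μ σ) (hμ1 : ∑ σ, μ σ = 1)
    (f : ι → Finset Ω) (A : ι → Ω → Finset Ω) (hA : ∀ i, ∀ σ ∈ f i, (A i σ).Nonempty)
    (ρ : ι → Ω → Ω → ℝ)
    (hρ0 : ∀ i σ τ, 0 ≤ ρ i σ τ)
    (hρsupp : ∀ i, ∀ σ ∈ f i, ∀ τ, τ ∉ A i σ → ρ i σ τ = 0)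
    (hρsum : ∀ i, ∀ σ ∈ f i, ∑ τ, ρ i σ τ = 1)
    (hregen : ∀ i (τ : Ω), ∑ σ ∈ f i, (μ σ / ∑ σ' ∈ f i, μ σ') * ρ i σ τ = μ τ)
    (t : ℕ) (a : Fin t → ι) (τ : Ω) :
    (∑ traj : Fin (t + 1) → Ω,
        if (∀ k : Fin t, traj k.castSucc ∈ f (a k)) ∧ traj (Fin.last t) = τ then
          μ (traj 0) * ∏ k : Fin t, ρ (a k) (traj k.castSucc) (traj k.succ)
        else 0)
      = μ τ *
        ∑ traj : Fin (t + 1) → Ω,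
          if (∀ k : Fin t, traj k.castSucc ∈ f (a k)) then
            μ (traj 0) * ∏ k : Fin t, ρ (a k) (traj k.castSucc) (traj k.succ)
          else 0 := by
  induction t generalizing τ with
  | zero =>
    rw [← ((Equiv.funUnique (Fin 1) Ω).symm).sum_comp
        (fun traj : Fin 1 → Ω =>
          if (∀ k : Fin 0, traj k.castSucc ∈ f (a k)) ∧ traj (Fin.last 0) = τ then
            μ (traj 0) * ∏ k : Fin 0, ρ (a k) (traj k.castSucc) (traj k.succ) else 0),
      ← ((Equiv.funUnique (Fin 1) Ω).symm).sum_comp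
        (fun traj : Fin 1 → Ω =>
          if (∀ k : Fin 0, traj k.castSucc ∈ f (a k)) then
            μ (traj 0) * ∏ k : Fin 0, ρ (a k) (traj k.castSucc) (traj k.succ) else 0)]
    simp [Finset.sum_ite_eq', hμ1]
  | succ t ih =>
    set i := a (Fin.last t) with hi
    set M : ℝ := ∑ σ ∈ f i, μ σ with hM
    -- nonemptiness of the flaw and positivity of its measure
    have hfne : (f i).Nonempty := by
      by_contra h
      rw [Finset.not_nonempty_iff_eq_empty] at h
      have h2 := hregen i τ
      rw [h] at h2
      simp at h2
      exact absurd h2.symm (ne_of_gt (hμpos τ))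
    have hMpos : 0 < M := Finset.sum_pos (fun σ _ => hμpos σ) hfne
    set W : (Fin (t + 1) → Ω) → ℝ := fun g =>
      μ (g 0) * ∏ k : Fin t, ρ (a k.castSucc) (g k.castSucc) (g k.succ) with hW
    set P : (Fin (t + 1) → Ω) → Prop := fun g =>
      ∀ k : Fin t, g k.castSucc ∈ f (a k.castSucc) with hP
    set T : ℝ := ∑ g : Fin (t + 1) → Ω, if P g then W g else 0 with hT
    have hIH : ∀ σ : Ω,
        (∑ g : Fin (t + 1) → Ω, if P g ∧ g (Fin.last t) = σ then W g else 0) = μ σ * T :=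
      fun σ => ih (fun k => a k.castSucc) σ
    have hkey : ∀ X : Ω → ℝ,
        (∑ g : Fin (t + 1) → Ω,
            if P g ∧ g (Fin.last t) ∈ f i then W g * X (g (Fin.last t)) else 0)
          = (∑ σ ∈ f i, μ σ * X σ) * T := by
      intro X
      have h1 : ∀ g : Fin (t + 1) → Ω,
          (if P g ∧ g (Fin.last t) ∈ f i then W g * X (g (Fin.last t)) else 0)
            = ∑ σ ∈ f i, if P g ∧ g (Fin.last t) = σ then W g * X σ else 0 := by
        intro g
        by_cases hPg : P g
        · have h2 : ∀ σ ∈ f i, (if P g ∧ g (Fin.last t) = σ then W g * X σ else 0)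
              = (if g (Fin.last t) = σ then W g * X σ else 0) :=
            fun σ _ => if_congr (and_iff_right hPg) rfl rfl
          rw [Finset.sum_congr rfl h2, Finset.sum_ite_eq]
          exact if_congr (and_iff_right hPg) rfl rfl
        · rw [if_neg (fun h => hPg h.1), Finset.sum_eq_zero]
          intro σ _
          rw [if_neg (fun h => hPg h.1)]
      rw [Finset.sum_congr rfl fun g _ => h1 g, Finset.sum_comm, Finset.sum_mul]
      refine Finset.sum_congr rfl fun σ hσ => ?_
      have h2 : (∑ g : Fin (t + 1) → Ω, if P g ∧ g (Fin.last t) = σ then W g * X σ else 0)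
          = X σ * ∑ g : Fin (t + 1) → Ω, if P g ∧ g (Fin.last t) = σ then W g else 0 := by
        rw [Finset.mul_sum]
        refine Finset.sum_congr rfl fun g _ => ?_
        split_ifs <;> ring
      rw [h2, hIH σ]; ring
    -- decompose trajectories of length t+2 as (last value, initial segment)
    rw [← ((Fin.snocEquiv (fun _ : Fin (t + 2) => Ω)).sum_comp
        (fun traj : Fin (t + 2) → Ω =>
          if (∀ k : Fin (t + 1), traj k.castSucc ∈ f (a k)) ∧ traj (Fin.last (t + 1)) = τ then
            μ (traj 0) * ∏ k : Fin (t + 1), ρ (a k) (traj k.castSucc) (traj k.succ) else 0)),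
      ← ((Fin.snocEquiv (fun _ : Fin (t + 2) => Ω)).sum_comp
        (fun traj : Fin (t + 2) → Ω =>
          if (∀ k : Fin (t + 1), traj k.castSucc ∈ f (a k)) then
            μ (traj 0) * ∏ k : Fin (t + 1), ρ (a k) (traj k.castSucc) (traj k.succ) else 0)),
      Fintype.sum_prod_type, Fintype.sum_prod_type]
    have hzero : ∀ (g : Fin (t + 1) → Ω) (x : Ω),
        Fin.snoc (α := fun _ : Fin (t + 2) => Ω) g x (0 : Fin (t + 2)) = g 0 := by
      intro g x
      have : (0 : Fin (t + 2)) = Fin.castSucc 0 := rfl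
      rw [this, Fin.snoc_castSucc]
    have hprod : ∀ (g : Fin (t + 1) → Ω) (x : Ω),
        (∏ k : Fin (t + 1), ρ (a k) (Fin.snoc (α := fun _ : Fin (t + 2) => Ω) g x k.castSucc) (Fin.snoc (α := fun _ : Fin (t + 2) => Ω) g x k.succ))
          = (∏ k : Fin t, ρ (a k.castSucc) (g k.castSucc) (g k.succ))
              * ρ i (g (Fin.last t)) x := by
      intro g x
      rw [Fin.prod_univ_castSucc]
      congr 1
      · refine Finset.prod_congr rfl fun k _ => ?_
        rw [Fin.succ_castSucc]
        simp only [Fin.snoc_castSucc]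
      · rw [Fin.snoc_castSucc, Fin.succ_last, Fin.snoc_last]
    have hcond : ∀ (g : Fin (t + 1) → Ω) (x : Ω),
        (∀ k : Fin (t + 1), Fin.snoc (α := fun _ : Fin (t + 2) => Ω) g x k.castSucc ∈ f (a k))
          ↔ (P g ∧ g (Fin.last t) ∈ f i) := by
      intro g x
      simp only [Fin.snoc_castSucc]
      exact Fin.forall_fin_succ'
    simp only [Fin.snocEquiv, Equiv.coe_fn_mk, Fin.snoc_last]
    have hLHS : (∑ x : Ω, ∑ g : Fin (t + 1) → Ω,
        if (∀ k : Fin (t + 1), Fin.snoc (α := fun _ : Fin (t + 2) => Ω) g x k.castSucc ∈ f (a k)) ∧ x = τ then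
          μ (Fin.snoc (α := fun _ : Fin (t + 2) => Ω) g x (0 : Fin (t + 2)))
            * ∏ k : Fin (t + 1), ρ (a k) (Fin.snoc (α := fun _ : Fin (t + 2) => Ω) g x k.castSucc) (Fin.snoc (α := fun _ : Fin (t + 2) => Ω) g x k.succ)
        else 0)
        = (∑ σ ∈ f i, μ σ * ρ i σ τ) * T := by
      rw [Finset.sum_comm]
      rw [← hkey (fun σ => ρ i σ τ)]
      refine Finset.sum_congr rfl fun g _ => ?_
      have : ∀ x : Ω,
          (if (∀ k : Fin (t + 1), Fin.snoc (α := fun _ : Fin (t + 2) => Ω) g x k.castSucc ∈ f (a k)) ∧ x = τ then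
            μ (Fin.snoc (α := fun _ : Fin (t + 2) => Ω) g x (0 : Fin (t + 2)))
              * ∏ k : Fin (t + 1), ρ (a k) (Fin.snoc (α := fun _ : Fin (t + 2) => Ω) g x k.castSucc) (Fin.snoc (α := fun _ : Fin (t + 2) => Ω) g x k.succ)
          else 0)
          = (if x = τ then
              (if P g ∧ g (Fin.last t) ∈ f i then W g * ρ i (g (Fin.last t)) x else 0)
            else 0) := by
        intro x
        rw [hzero, hprod]
        simp only [hcond g x]
        by_cases hx : x = τ
        · simp only [hx, if_true, and_true]
          split_ifs with h
          · rw [hW]; ring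
          · rfl
        · simp [hx]
      rw [Finset.sum_congr rfl fun x _ => this x, Finset.sum_ite_eq' Finset.univ τ]
      simp
    rw [hLHS]
    have hRHS : (∑ x : Ω, ∑ g : Fin (t + 1) → Ω,
        if (∀ k : Fin (t + 1), Fin.snoc (α := fun _ : Fin (t + 2) => Ω) g x k.castSucc ∈ f (a k)) then
          μ (Fin.snoc (α := fun _ : Fin (t + 2) => Ω) g x (0 : Fin (t + 2)))
            * ∏ k : Fin (t + 1), ρ (a k) (Fin.snoc (α := fun _ : Fin (t + 2) => Ω) g x k.castSucc) (Fin.snoc (α := fun _ : Fin (t + 2) => Ω) g x k.succ)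
        else 0)
        = M * T := by
      rw [Finset.sum_comm]
      have hone : M = ∑ σ ∈ f i, μ σ * (fun _ : Ω => (1 : ℝ)) σ := by simp [hM]
      rw [hone, ← hkey (fun _ => 1)]
      refine Finset.sum_congr rfl fun g _ => ?_
      have heach : ∀ x : Ω,
          (if (∀ k : Fin (t + 1), Fin.snoc (α := fun _ : Fin (t + 2) => Ω) g x k.castSucc ∈ f (a k)) then
            μ (Fin.snoc (α := fun _ : Fin (t + 2) => Ω) g x (0 : Fin (t + 2)))
              * ∏ k : Fin (t + 1), ρ (a k) (Fin.snoc (α := fun _ : Fin (t + 2) => Ω) g x k.castSucc) (Fin.snoc (α := fun _ : Fin (t + 2) => Ω) g x k.succ)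
          else 0)
          = (if P g ∧ g (Fin.last t) ∈ f i then W g * ρ i (g (Fin.last t)) x else 0) := by
        intro x
        rw [hzero, hprod]
        simp only [hcond g x]
        split_ifs with h
        · rw [hW]; ring
        · rfl
      rw [Finset.sum_congr rfl fun x _ => heach x]
      split_ifs with h
      · rw [← Finset.mul_sum, hρsum i _ h.2, mul_one]
      · simp
    erw [hRHS]
    -- regeneration: ∑ σ ∈ f i, μ σ * ρ i σ τ = μ τ * M
    have hreg : (∑ σ ∈ f i, μ σ * ρ i σ τ) = μ τ * M := by
      have h := hregen i τ
      rw [← hM] at h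
      calc (∑ σ ∈ f i, μ σ * ρ i σ τ)
          = (∑ σ ∈ f i, (μ σ / M) * ρ i σ τ) * M := by
            rw [Finset.sum_mul]
            refine Finset.sum_congr rfl fun σ _ => ?_
            field_simp
        _ = μ τ * M := by rw [h]
    rw [hreg]; ring
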